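/- For the polar transform G_N = F^{⊗n} over GF(2), the entry (G_N)_{i,j} equals 1 if and only if the binary expansion of j is componentwise dominated by the binary expansion of i (i.e., every bit set in j is also set in i). -/

import Mathlib

/-- The polar kernel `F = [[1,0],[1,1]]` over GF(2). -/
def polarF : Matrix (Fin 2) (Fin 2) (ZMod 2) := !![1, 0; 1, 1]

/-- Index equivalence `Fin 2 × Fin (2^n) ≃ Fin (2^(n+1))`, sending `(a, b)` to
`b + 2^n * a` (so `a` is the top bit). -/
def polarIdx (n : ℕ) : Fin 2 × Fin (2 ^ n) ≃ Fin (2 ^ (n + 1)) :=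
  finProdFinEquiv.trans (finCongr (by rw [pow_succ, mul_comm]))

/-- The polar transform `G_N = F^{⊗n}` as an `N × N` matrix over GF(2), `N = 2^n`. -/
def polarG : (n : ℕ) → Matrix (Fin (2 ^ n)) (Fin (2 ^ n)) (ZMod 2)
  | 0 => 1
  | n + 1 =>
    Matrix.reindex (polarIdx n) (polarIdx n)
      (Matrix.kroneckerMap (· * ·) polarF (polarG n))

lemma polarIdx_val (n : ℕ) (a : Fin 2) (b : Fin (2 ^ n)) :
    ((polarIdx n (a, b) : Fin (2 ^ (n + 1))) : ℕ) = 2 ^ n * a + b := by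
  simp [polarIdx, finProdFinEquiv]
  ring

lemma fin2_testBit (a : Fin 2) (k : ℕ) :
    (a : ℕ).testBit k = (decide (k = 0) && decide (a = 1)) := by
  fin_cases a <;> cases k <;> simp [Nat.testBit_succ]

lemma aux_bits (n : ℕ) (a₁ b₁ : Fin 2) (a₂ b₂ : Fin (2 ^ n)) :
    (∀ k : ℕ, (2 ^ n * (b₁ : ℕ) + b₂).testBit k = true →
        (2 ^ n * (a₁ : ℕ) + a₂).testBit k = true) ↔
      ((b₁ = 1 → a₁ = 1) ∧
        ∀ k : ℕ, (b₂ : ℕ).testBit k = true → (a₂ : ℕ).testBit k = true) := by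
  have ha := Nat.testBit_two_pow_mul_add (a₁ : ℕ) a₂.isLt
  have hb := Nat.testBit_two_pow_mul_add (b₁ : ℕ) b₂.isLt
  constructor
  · intro h
    constructor
    · intro hb1
      have := h n
      rw [ha n, hb n] at this
      simp [fin2_testBit, hb1] at this
      omega
    · intro k hk
      have hklt : k < n := by
        by_contra hge
        rw [Nat.testBit_lt_two_pow (lt_of_lt_of_le b₂.isLt
          (Nat.pow_le_pow_right (by norm_num) (le_of_not_gt hge)))] at hk
        exact Bool.false_ne_true hk
      have := h k
      rw [ha k, hb k, if_pos hklt, if_pos hklt] at this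
      exact this hk
  · rintro ⟨h1, h2⟩ k hk
    rw [ha k]
    rw [hb k] at hk
    split at hk <;> rename_i hkn
    · rw [if_pos hkn]; exact h2 k hk
    · rw [if_neg hkn]
      rw [fin2_testBit] at hk ⊢
      simp_all

/-- `(G_N)_{i,j} = 1` iff the binary expansion of `j` is componentwise dominated by
that of `i`. -/
theorem polarG_entry_iff_bit_domination (n : ℕ) (i j : Fin (2 ^ n)) :
    polarG n i j = 1 ↔ ∀ k : ℕ, (j : ℕ).testBit k = true → (i : ℕ).testBit k = true := by
  induction n with
  | zero =>
    have hij : i = j := by omega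
    subst hij
    have hb : ∀ k, (i : ℕ).testBit k = false := fun k => by
      have : (i : ℕ) = 0 := by omega
      simp [this]
    simp [polarG, Matrix.one_apply, hb]
  | succ n ih =>
    obtain ⟨⟨a₁, a₂⟩, rfl⟩ := (polarIdx n).surjective i
    obtain ⟨⟨b₁, b₂⟩, rfl⟩ := (polarIdx n).surjective j
    have hmul : ∀ x y : ZMod 2, x * y = 1 ↔ x = 1 ∧ y = 1 := by decide
    have hF : ∀ a b : Fin 2, polarF a b = 1 ↔ (b = 1 → a = 1) := by
      intro a b; fin_cases a <;> fin_cases b <;> simp [polarF]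
    rw [polarIdx_val, polarIdx_val, aux_bits]
    simp only [polarG, Matrix.reindex_apply, Matrix.submatrix_apply,
      Equiv.symm_apply_apply, Matrix.kroneckerMap_apply, hmul, hF, ih]
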